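/- arXiv:0908.2721 — 4 statements merged into one kernel-verified Lean document; each statement's English description precedes it below -/
import Mathlib

section
/- Let α, β, C > 0. The system of equations α = (A₁/2)(A₁ + A₂ − C) and β = (A₂/2)(A₁ + A₂ − C) has a unique solution (A₁, A₂) with A₁ > 0, A₂ > 0 and A₁ + A₂ > C, namely A₁ = (α/(α+β))·(C/2)·(1 + √(1 + 8(α+β)/C²)) and A₂ = (β/(α+β))·(C/2)·(1 + √(1 + 8(α+β)/C²)); moreover for this solution C·A₁/(A₁+A₂) = α·C/(α+β) and C·A₂/(A₁+A₂) = β·C/(α+β). -/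
/-- Stationary solution of the two-flow LQF fluid model: the system
`α = (A₁/2)(A₁+A₂−C)`, `β = (A₂/2)(A₁+A₂−C)` has a unique solution with
`A₁ > 0`, `A₂ > 0`, `A₁ + A₂ > C`, given in closed form; moreover the
corresponding throughputs are `αC/(α+β)` and `βC/(α+β)`. -/
theorem lqf_two_flow_stationary (α β C : ℝ) (hα : 0 < α) (hβ : 0 < β) (hC : 0 < C) :
    (∀ A₁ A₂ : ℝ,
      (0 < A₁ ∧ 0 < A₂ ∧ C < A₁ + A₂ ∧
        α = (A₁ / 2) * (A₁ + A₂ - C) ∧ β = (A₂ / 2) * (A₁ + A₂ - C)) ↔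
      (A₁ = (α / (α + β)) * (C / 2) * (1 + Real.sqrt (1 + 8 * (α + β) / C ^ 2)) ∧
       A₂ = (β / (α + β)) * (C / 2) * (1 + Real.sqrt (1 + 8 * (α + β) / C ^ 2)))) ∧
    (∀ A₁ A₂ : ℝ,
      A₁ = (α / (α + β)) * (C / 2) * (1 + Real.sqrt (1 + 8 * (α + β) / C ^ 2)) →
      A₂ = (β / (α + β)) * (C / 2) * (1 + Real.sqrt (1 + 8 * (α + β) / C ^ 2)) →
      C * A₁ / (A₁ + A₂) = α * C / (α + β) ∧
      C * A₂ / (A₁ + A₂) = β * C / (α + β)) := by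
  have hγ : 0 < α + β := by linarith
  have hγne : (α + β) ≠ 0 := ne_of_gt hγ
  set s : ℝ := Real.sqrt (1 + 8 * (α + β) / C ^ 2) with hsdef
  have hs0 : 0 ≤ s := Real.sqrt_nonneg _
  have hs2 : s ^ 2 = 1 + 8 * (α + β) / C ^ 2 := Real.sq_sqrt (by positivity)
  have hC2 : (0:ℝ) < C ^ 2 := by positivity
  have hCs2 : C ^ 2 * s ^ 2 = C ^ 2 + 8 * (α + β) := by
    rw [hs2]; field_simp
  have hpos : 0 < 8 * (α + β) / C ^ 2 := by positivity
  have hs1 : 1 < s := by nlinarith [hpos, sq_nonneg s]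
  have hTpos : 0 < (C / 2) * (1 + s) := by nlinarith
  have hTC : C < (C / 2) * (1 + s) := by nlinarith
  have hTeq : ((C / 2) * (1 + s) / 2) * ((C / 2) * (1 + s) - C) = α + β := by
    linear_combination (1/8) * hCs2
  -- sum of the closed-form solution equals (C/2)(1+s)
  have hsum : ∀ A₁ A₂ : ℝ,
      A₁ = (α / (α + β)) * (C / 2) * (1 + s) →
      A₂ = (β / (α + β)) * (C / 2) * (1 + s) →
      A₁ + A₂ = (C / 2) * (1 + s) := by
    intro A₁ A₂ h1 h2
    have h : A₁ + A₂ = ((α / (α + β)) + (β / (α + β))) * ((C / 2) * (1 + s)) := by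
      rw [h1, h2]; ring
    rw [h, ← add_div, div_self hγne, one_mul]
  constructor
  · intro A₁ A₂
    constructor
    · rintro ⟨h1, h2, h3, h4, h5⟩
      have hsq : (2 * (A₁ + A₂) - C - C * s) * (2 * (A₁ + A₂) - C + C * s) = 0 := by
        linear_combination (-8) * h4 + (-8) * h5 - hCs2
      have hp2 : 0 < 2 * (A₁ + A₂) - C + C * s := by
        nlinarith [mul_pos hC (lt_trans one_pos hs1)]
      have hz : 2 * (A₁ + A₂) - C - C * s = 0 := by
        rcases mul_eq_zero.mp hsq with h | h
        · exact h
        · exact absurd h (ne_of_gt hp2)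
      have hA : A₁ + A₂ = (C / 2) * (1 + s) := by linear_combination (1/2) * hz
      have hγA1 : (α + β) * A₁ = α * (A₁ + A₂) := by
        linear_combination A₁ * h5 - A₂ * h4
      have hγA2 : (α + β) * A₂ = β * (A₁ + A₂) := by
        linear_combination A₂ * h4 - A₁ * h5
      rw [hA] at hγA1 hγA2
      constructor
      · rw [div_mul_eq_mul_div, div_mul_eq_mul_div, eq_div_iff hγne]
        linear_combination hγA1
      · rw [div_mul_eq_mul_div, div_mul_eq_mul_div, eq_div_iff hγne]
        linear_combination hγA2
    · rintro ⟨h1, h2⟩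
      have hA : A₁ + A₂ = (C / 2) * (1 + s) := hsum A₁ A₂ h1 h2
      have hA1 : 0 < A₁ := by
        rw [h1]; positivity
      have hA2 : 0 < A₂ := by
        rw [h2]; positivity
      refine ⟨hA1, hA2, by rw [hA]; exact hTC, ?_, ?_⟩
      · have h : (A₁ / 2) * (A₁ + A₂ - C)
            = (α / (α + β)) * (((C / 2) * (1 + s) / 2) * ((C / 2) * (1 + s) - C)) := by
          rw [hA, h1]; ring
        rw [h, hTeq, div_mul_cancel₀ α hγne]
      · have h : (A₂ / 2) * (A₁ + A₂ - C)
            = (β / (α + β)) * (((C / 2) * (1 + s) / 2) * ((C / 2) * (1 + s) - C)) := by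
          rw [hA, h2]; ring
        rw [h, hTeq, div_mul_cancel₀ β hγne]
  · intro A₁ A₂ h1 h2
    have hA : A₁ + A₂ = (C / 2) * (1 + s) := hsum A₁ A₂ h1 h2
    have hAne : A₁ + A₂ ≠ 0 := by rw [hA]; exact ne_of_gt hTpos
    constructor
    · have h : C * A₁ = (α * C / (α + β)) * (A₁ + A₂) := by
        rw [hA, h1]; ring
      rw [h, mul_div_assoc, div_self hAne, mul_one]
    · have h : C * A₂ = (β * C / (α + β)) * (A₁ + A₂) := by
        rw [hA, h2]; ring
      rw [h, mul_div_assoc, div_self hAne, mul_one]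
end

section
/- Fix β > 0 and C > 0, and let a > 0, b ∈ ℝ and T ≥ 0. Then ∫₀ᵀ 2√β · a · f(a, b, u) du = log( 1 + (a·√(2π)/(2√β))·e^{(b−C)²/(2β)}·(Erf((b−C+βT)/√(2β)) − Erf((b−C)/√(2β))) ). -/
/-- The error function `Erf x = (2/√π)·∫₀ˣ e^{−u²} du`. -/
noncomputable def Erf (x : ℝ) : ℝ :=
  (2 / Real.sqrt Real.pi) * ∫ u in (0:ℝ)..x, Real.exp (-u ^ 2)

/-- `f(a,b,t)` from the SQF limit-cycle analysis (for parameters `β`, `C`). -/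
noncomputable def f (β C a b t : ℝ) : ℝ :=
  Real.exp (-(t / 2) * (2 * b - 2 * C + β * t)) /
    (2 * Real.sqrt β +
      a * Real.exp ((b - C) ^ 2 / (2 * β)) * Real.sqrt (2 * Real.pi) *
        (Erf ((b - C + β * t) / Real.sqrt (2 * β)) -
         Erf ((b - C) / Real.sqrt (2 * β))))

lemma cont_exp_neg_sq : Continuous fun u : ℝ => Real.exp (-u ^ 2) := by fun_prop

lemma hasDerivAt_Erf (x : ℝ) :
    HasDerivAt Erf (2 / Real.sqrt Real.pi * Real.exp (-x ^ 2)) x := by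
  have h : HasDerivAt (fun y => ∫ u in (0:ℝ)..y, Real.exp (-u ^ 2)) (Real.exp (-x ^ 2)) x :=
    intervalIntegral.integral_hasDerivAt_right
      (cont_exp_neg_sq.intervalIntegrable _ _)
      (cont_exp_neg_sq.stronglyMeasurableAtFilter _ _)
      cont_exp_neg_sq.continuousAt
  exact h.const_mul (2 / Real.sqrt Real.pi)

lemma Erf_mono : Monotone Erf :=
  (strictMono_of_hasDerivAt_pos hasDerivAt_Erf fun x => by positivity).monotone

/-- The denominator of `f`. -/
noncomputable def Dfun (β C a b t : ℝ) : ℝ :=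
  2 * Real.sqrt β +
    a * Real.exp ((b - C) ^ 2 / (2 * β)) * Real.sqrt (2 * Real.pi) *
      (Erf ((b - C + β * t) / Real.sqrt (2 * β)) -
       Erf ((b - C) / Real.sqrt (2 * β)))

lemma hasDerivAt_Dfun (β C a b : ℝ) (hβ : 0 < β) (t : ℝ) :
    HasDerivAt (Dfun β C a b)
      (2 * Real.sqrt β * a * Real.exp (-(t / 2) * (2 * b - 2 * C + β * t))) t := by
  set s := Real.sqrt (2 * β) with hs
  have hspos : 0 < s := Real.sqrt_pos.mpr (by linarith)
  have hinner : HasDerivAt (fun t : ℝ => (b - C + β * t) / s) (β / s) t := by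
    simpa using ((hasDerivAt_id t).const_mul β |>.const_add (b - C)).div_const s
  have hE : HasDerivAt (fun t : ℝ => Erf ((b - C + β * t) / s))
      (2 / Real.sqrt Real.pi * Real.exp (-((b - C + β * t) / s) ^ 2) * (β / s)) t :=
    (hasDerivAt_Erf _).comp t hinner
  have hD : HasDerivAt (Dfun β C a b)
      (a * Real.exp ((b - C) ^ 2 / (2 * β)) * Real.sqrt (2 * Real.pi) *
        (2 / Real.sqrt Real.pi * Real.exp (-((b - C + β * t) / s) ^ 2) * (β / s))) t := by
    unfold Dfun
    exact ((hE.sub_const (Erf ((b - C) / s))).const_mul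
      (a * Real.exp ((b - C) ^ 2 / (2 * β)) * Real.sqrt (2 * Real.pi))).const_add
      (2 * Real.sqrt β)
  convert hD using 1
  have hsq : s ^ 2 = 2 * β := Real.sq_sqrt (by linarith)
  have h2 : (-((b - C + β * t) / s) ^ 2) = -((b - C + β * t) ^ 2 / (2 * β)) := by
    rw [div_pow, hsq]
  rw [h2]
  have key : Real.exp ((b - C) ^ 2 / (2 * β)) * Real.exp (-((b - C + β * t) ^ 2 / (2 * β)))
      = Real.exp (-(t / 2) * (2 * b - 2 * C + β * t)) := by
    rw [← Real.exp_add]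
    congr 1
    field_simp
    ring
  have hπ : (0:ℝ) < Real.sqrt Real.pi := Real.sqrt_pos.mpr Real.pi_pos
  have hb : (0:ℝ) < Real.sqrt β := Real.sqrt_pos.mpr hβ
  have h2p : (0:ℝ) < Real.sqrt 2 := by positivity
  have hconst : Real.sqrt (2 * Real.pi) * (2 / Real.sqrt Real.pi) * (β / s) =
      2 * Real.sqrt β := by
    rw [hs, Real.sqrt_mul (by norm_num : (0:ℝ) ≤ 2),
        Real.sqrt_mul (by norm_num : (0:ℝ) ≤ 2)]
    have hbb : Real.sqrt β * Real.sqrt β = β := Real.mul_self_sqrt hβ.le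
    field_simp
    linear_combination (-1) * hbb
  rw [← key, ← hconst]
  ring

/-- Integral of the SQF rate decay `2√β·a·f(a,b,·)` over `[0,T]`: the
integrand is the logarithmic derivative of the denominator of `f`. -/
theorem sqf_rate_decay_integral (β C a b T : ℝ) (hβ : 0 < β) (hC : 0 < C)
    (ha : 0 < a) (hT : 0 ≤ T) :
    ∫ u in (0:ℝ)..T, 2 * Real.sqrt β * a * f β C a b u =
      Real.log (1 + (a * Real.sqrt (2 * Real.pi) / (2 * Real.sqrt β)) *
        Real.exp ((b - C) ^ 2 / (2 * β)) *
        (Erf ((b - C + β * T) / Real.sqrt (2 * β)) -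
         Erf ((b - C) / Real.sqrt (2 * β)))) := by
  have hb : (0:ℝ) < Real.sqrt β := Real.sqrt_pos.mpr hβ
  have hspos : (0:ℝ) < Real.sqrt (2 * β) := Real.sqrt_pos.mpr (by linarith)
  have huIcc : Set.uIcc (0:ℝ) T = Set.Icc 0 T := Set.uIcc_of_le hT
  -- positivity of the denominator on [0,T]
  have hDpos : ∀ t ∈ Set.uIcc (0:ℝ) T, 0 < Dfun β C a b t := by
    intro t ht
    rw [huIcc] at ht
    have ht0 : 0 ≤ t := ht.1
    have hΔ : 0 ≤ Erf ((b - C + β * t) / Real.sqrt (2 * β)) -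
        Erf ((b - C) / Real.sqrt (2 * β)) := by
      apply sub_nonneg.mpr
      apply Erf_mono
      have hle : b - C ≤ b - C + β * t := by nlinarith
      exact div_le_div_of_nonneg_right hle hspos.le
    have h1 : 0 ≤ a * Real.exp ((b - C) ^ 2 / (2 * β)) * Real.sqrt (2 * Real.pi) *
        (Erf ((b - C + β * t) / Real.sqrt (2 * β)) -
         Erf ((b - C) / Real.sqrt (2 * β))) := by
      apply mul_nonneg (by positivity) hΔ
    unfold Dfun
    linarith
  have hDne : ∀ t ∈ Set.uIcc (0:ℝ) T, Dfun β C a b t ≠ 0 :=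
    fun t ht => (hDpos t ht).ne'
  -- the integrand is the derivative of log ∘ D
  have hlog : ∀ t ∈ Set.uIcc (0:ℝ) T,
      HasDerivAt (fun u => Real.log (Dfun β C a b u))
        (2 * Real.sqrt β * a * f β C a b t) t := by
    intro t ht
    have h := (hasDerivAt_Dfun β C a b hβ t).log (hDne t ht)
    have heq : 2 * Real.sqrt β * a * f β C a b t =
        2 * Real.sqrt β * a * Real.exp (-(t / 2) * (2 * b - 2 * C + β * t)) /
          Dfun β C a b t := by
      unfold f Dfun
      rw [mul_div_assoc]
    rw [heq]
    exact h
  -- integrability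
  have hDcont : Continuous (Dfun β C a b) :=
    continuous_iff_continuousAt.mpr fun t =>
      (hasDerivAt_Dfun β C a b hβ t).differentiableAt.continuousAt
  have hint : IntervalIntegrable (fun u => 2 * Real.sqrt β * a * f β C a b u)
      MeasureTheory.volume 0 T := by
    apply ContinuousOn.intervalIntegrable
    have : ContinuousOn (fun u => f β C a b u) (Set.uIcc 0 T) := by
      unfold f
      exact ContinuousOn.div (by fun_prop) hDcont.continuousOn hDne
    exact this.const_smul (2 * Real.sqrt β * a) |>.congr (fun x hx => by simp [smul_eq_mul])
  have hFTC := intervalIntegral.integral_eq_sub_of_hasDerivAt hlog hint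
  rw [hFTC]
  have hD0 : Dfun β C a b 0 = 2 * Real.sqrt β := by
    simp [Dfun]
  have hDT0 : Dfun β C a b T ≠ 0 := hDne T (by rw [huIcc]; exact ⟨hT, le_refl T⟩)
  rw [hD0, ← Real.log_div hDT0 (by positivity)]
  have hratio : Dfun β C a b T / (2 * Real.sqrt β) =
      1 + (a * Real.sqrt (2 * Real.pi) / (2 * Real.sqrt β)) *
        Real.exp ((b - C) ^ 2 / (2 * β)) *
        (Erf ((b - C + β * T) / Real.sqrt (2 * β)) -
         Erf ((b - C) / Real.sqrt (2 * β))) := by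
    unfold Dfun
    rw [add_div, div_self (by positivity : (2 * Real.sqrt β) ≠ 0)]
    ring
  rw [hratio]
end

section
/- Let N ≥ 2, C > 0 and α₁, …, α_N > 0, and write Σα = α₁ + ⋯ + α_N. The system of equations α_k = (A_k/2)·(S − C) for k = 1, …, N, where S = A₁ + ⋯ + A_N, has a unique solution with all A_k > 0 and S > C, namely S = (C/2)·(1 + √(1 + 8·Σα/C²)) and A_k = (α_k/Σα)·S; moreover for this solution C·A_k/S = C·α_k/Σα for every k. -/
open Finset

/-- Stationary solution of the `N`-flow LQF fluid model: the system
`α_k = (A_k/2)(S − C)` with `S = ∑ A_k` has a unique solution with all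
`A_k > 0` and `S > C`, given by `S = (C/2)(1 + √(1 + 8Sa/C²))` and
`A_k = (α_k/Sa)·S`; moreover the throughputs satisfy `C·A_k/S = C·α_k/Sa`. -/
theorem lqf_N_flow_stationary (N : ℕ) (hN : 2 ≤ N) (C : ℝ) (hC : 0 < C)
    (α : Fin N → ℝ) (hα : ∀ k, 0 < α k) :
    (∀ A : Fin N → ℝ,
      ((∀ k, 0 < A k) ∧ C < ∑ j, A j ∧
        (∀ k, α k = (A k / 2) * ((∑ j, A j) - C))) ↔
      (∀ k, A k = (α k / ∑ j, α j) *
        ((C / 2) * (1 + Real.sqrt (1 + 8 * (∑ j, α j) / C ^ 2))))) ∧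
    (∀ A : Fin N → ℝ,
      (∀ k, A k = (α k / ∑ j, α j) *
        ((C / 2) * (1 + Real.sqrt (1 + 8 * (∑ j, α j) / C ^ 2)))) →
      (∑ j, A j = (C / 2) * (1 + Real.sqrt (1 + 8 * (∑ j, α j) / C ^ 2)) ∧
       ∀ k, C * A k / (∑ j, A j) = C * α k / (∑ j, α j))) := by
  have hNpos : 0 < N := by omega
  have hne : Nonempty (Fin N) := ⟨⟨0, hNpos⟩⟩
  set Sa := ∑ j, α j with hSadef
  have hSa : 0 < Sa := Finset.sum_pos (fun i _ => hα i) Finset.univ_nonempty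
  have hSane : Sa ≠ 0 := ne_of_gt hSa
  set sq := Real.sqrt (1 + 8 * Sa / C ^ 2) with hsqdef
  have harg : (0:ℝ) ≤ 1 + 8 * Sa / C ^ 2 := by positivity
  have hsq2 : sq ^ 2 = 1 + 8 * Sa / C ^ 2 := Real.sq_sqrt harg
  have hCne : C ≠ 0 := ne_of_gt hC
  have hsq2' : C ^ 2 * sq ^ 2 = C ^ 2 + 8 * Sa := by
    rw [hsq2]; field_simp
  have hsq1 : 1 < sq := by
    have h1 : 0 < 8 * Sa / C ^ 2 := by positivity
    nlinarith [Real.sqrt_nonneg (1 + 8 * Sa / C ^ 2), hsq2]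
  set S₀ := (C / 2) * (1 + sq) with hS0def
  have hS0C : C < S₀ := by nlinarith
  have hS0pos : 0 < S₀ := lt_trans hC hS0C
  have hS0ne : S₀ ≠ 0 := ne_of_gt hS0pos
  have hkey : S₀ * (S₀ - C) = 2 * Sa := by nlinarith [hsq2']
  have hSum : ∀ A : Fin N → ℝ, (∀ k, A k = (α k / Sa) * S₀) → ∑ j, A j = S₀ := by
    intro A hA
    rw [Finset.sum_congr rfl (fun k _ => hA k), ← Finset.sum_mul, ← Finset.sum_div,
      ← hSadef]
    field_simp
  constructor
  · intro A
    constructor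
    · rintro ⟨hpos, hSC, heq⟩
      set S := ∑ j, A j with hSdef
      have hsum : Sa = (S / 2) * (S - C) := by
        rw [hSadef, Finset.sum_congr rfl (fun k _ => heq k), ← Finset.sum_mul,
          ← Finset.sum_div]
      have hSS0 : S = S₀ := by nlinarith
      intro k
      have hk := heq k
      rw [hSS0] at hk
      field_simp
      linear_combination (- S₀) * hk - (A k / 2) * hkey
    · intro hA
      have hSsum := hSum A hA
      refine ⟨fun k => ?_, by rw [hSsum]; exact hS0C, fun k => ?_⟩
      · exact (hA k) ▸ mul_pos (div_pos (hα k) hSa) hS0pos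
      · rw [hSsum, hA k]
        field_simp
        linear_combination (- α k) * hkey
  · intro A hA
    have hSsum := hSum A hA
    refine ⟨hSsum, fun k => ?_⟩
    rw [hSsum, hA k]
    field_simp
end

section
/- Let α > 0, C > 0 and 0 < X < C, and set Ā₁ = ((C − X)/2)·(1 + √(1 + 8α/(C − X)²)) and L̄ = C·X/(X + Ā₁). Then C·X/(C + √(2α)) < L̄ < X. -/
/-- Bounds on the stationary UDP loss rate `L̄ = C·X/(X + Ā₁)` under LQF:
`C·X/(C + √(2α)) < L̄ < X`, so UDP traffic essentially stalls. -/
theorem lqf_udp_loss_rate_bounds (α C X : ℝ) (hα : 0 < α) (hC : 0 < C)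
    (hX0 : 0 < X) (hXC : X < C) :
    C * X / (C + Real.sqrt (2 * α)) <
      C * X / (X + ((C - X) / 2) * (1 + Real.sqrt (1 + 8 * α / (C - X) ^ 2))) ∧
    C * X / (X + ((C - X) / 2) * (1 + Real.sqrt (1 + 8 * α / (C - X) ^ 2))) < X := by
  set D := C - X with hD
  have hD0 : 0 < D := by simp [hD]; linarith
  set s := Real.sqrt (1 + 8 * α / D ^ 2) with hs
  have hs1 : 1 < s := by
    rw [hs]
    have : (1:ℝ) < 1 + 8 * α / D ^ 2 := by
      have : 0 < 8 * α / D ^ 2 := by positivity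
      linarith
    nlinarith [Real.sq_sqrt (by linarith : (0:ℝ) ≤ 1 + 8 * α / D ^ 2),
      Real.sqrt_nonneg (1 + 8 * α / D ^ 2)]
  have hA0 : 0 < X + D / 2 * (1 + s) := by positivity
  have hDs : D * s = Real.sqrt (D ^ 2 + 8 * α) := by
    rw [hs, ← Real.sqrt_sq hD0.le, ← Real.sqrt_mul (by positivity)]
    congr 1
    field_simp
    rw [Real.sq_sqrt (by positivity)]
  have h2a : 0 < Real.sqrt (2 * α) := Real.sqrt_pos.mpr (by linarith)
  have hsq2a : Real.sqrt (2 * α) ^ 2 = 2 * α := Real.sq_sqrt (by linarith)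
  constructor
  · apply div_lt_div_of_pos_left (by positivity) hA0
    -- need X + D/2*(1+s) < C + √(2α), i.e. D*s < D + 2√(2α)
    have key : Real.sqrt (D ^ 2 + 8 * α) < D + 2 * Real.sqrt (2 * α) := by
      rw [Real.sqrt_lt' (by positivity)]
      nlinarith [mul_pos hD0 h2a]
    rw [← hDs] at key
    have : C = X + D := by rw [hD]; ring
    rw [this]
    nlinarith [mul_pos hX0 hD0]
  · rw [div_lt_iff₀ hA0]
    have hC' : C = X + D := by rw [hD]; ring
    nlinarith [mul_pos (mul_pos hX0 hD0) (by linarith : (0:ℝ) < s - 1)]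
end
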